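/- For every positive integer n, 2·ν₂(n) = Σ_{k=1}^{n-1} d(k)·d(n−k) − σ₁(n) + d(n), where ν₂(n) is the number of partitions of n into exactly two distinct part sizes. -/

import Mathlib

def numPartSizes {n : ℕ} (p : n.Partition) : ℕ := p.parts.toFinset.card

/-- `nu k n` is the number of partitions of `n` into exactly `k` distinct part sizes. -/
def nu (k n : ℕ) : ℕ := Finset.card (Finset.univ.filter (fun p : n.Partition => numPartSizes p = k))

open Finset

/-- Quadruples ((a,x),(b,y)) of positives with a*x + b*y = n. -/
private def QQ (n : ℕ) : Finset ((ℕ × ℕ) × ℕ × ℕ) :=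
  ((Icc 1 n ×ˢ Icc 1 n) ×ˢ Icc 1 n ×ˢ Icc 1 n).filter
    (fun q => q.1.1 * q.1.2 + q.2.1 * q.2.2 = n)

private lemma mem_QQ {n a x b y : ℕ} :
    ((a, x), (b, y)) ∈ QQ n ↔ 0 < a ∧ 0 < x ∧ 0 < b ∧ 0 < y ∧ a * x + b * y = n := by
  simp only [QQ, mem_filter, mem_product, mem_Icc]
  constructor
  · rintro ⟨⟨⟨⟨ha, _⟩, hx, _⟩, ⟨hb, _⟩, hy, _⟩, he⟩
    exact ⟨ha, hx, hb, hy, he⟩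
  · rintro ⟨ha, hx, hb, hy, he⟩
    have h1 : a ≤ a * x := Nat.le_mul_of_pos_right a hx
    have h2 : x ≤ a * x := Nat.le_mul_of_pos_left x ha
    have h3 : b ≤ b * y := Nat.le_mul_of_pos_right b hy
    have h4 : y ≤ b * y := Nat.le_mul_of_pos_left y hb
    refine ⟨⟨⟨⟨ha, ?_⟩, hx, ?_⟩, ⟨hb, ?_⟩, hy, ?_⟩, he⟩ <;> omega

private lemma sum_eq_card_QQ (n : ℕ) :
    ∑ k ∈ Ico 1 n, k.divisors.card * (n - k).divisors.card = (QQ n).card := by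
  rw [Finset.card_eq_sum_card_fiberwise (f := fun q => q.1.1 * q.1.2) (t := Ico 1 n)
    (fun q hq => by
      obtain ⟨⟨a, x⟩, b, y⟩ := q
      rw [Finset.mem_coe, mem_QQ] at hq
      obtain ⟨ha, hx, hb, hy, he⟩ := hq
      have h1 : 1 ≤ a * x := Nat.one_le_iff_ne_zero.2 (by positivity)
      have h3 : 1 ≤ b * y := Nat.one_le_iff_ne_zero.2 (by positivity)
      show a * x ∈ Ico 1 n
      rw [mem_Ico]
      omega)]
  refine Finset.sum_congr rfl fun k hk => ?_
  rw [mem_Ico] at hk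
  rw [← Finset.card_product]
  refine (Finset.card_bij (fun q _ => (q.1.1, q.2.1)) ?_ ?_ ?_).symm
  · rintro ⟨⟨a, x⟩, b, y⟩ hq
    have hq1 := (mem_filter.1 hq).1
    have hax : a * x = k := (mem_filter.1 hq).2
    rw [mem_QQ] at hq1
    obtain ⟨ha, hx, hb, hy, he⟩ := hq1
    have hby : b * y = n - k := by omega
    refine mem_product.2 ⟨Nat.mem_divisors.2 ⟨⟨x, hax.symm⟩, by omega⟩,
      Nat.mem_divisors.2 ⟨⟨y, hby.symm⟩, by omega⟩⟩
  · rintro ⟨⟨a₁, x₁⟩, b₁, y₁⟩ h₁ ⟨⟨a₂, x₂⟩, b₂, y₂⟩ h₂ h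
    have ha : a₁ = a₂ := congrArg Prod.fst h
    have hb : b₁ = b₂ := congrArg Prod.snd h
    subst ha; subst hb
    have e₁ := (mem_filter.1 h₁).1
    have e₂ := (mem_filter.1 h₂).1
    rw [mem_QQ] at e₁ e₂
    have hax₁ : a₁ * x₁ = k := (mem_filter.1 h₁).2
    have hax₂ : a₁ * x₂ = k := (mem_filter.1 h₂).2
    have hxx : x₁ = x₂ := Nat.eq_of_mul_eq_mul_left e₁.1 (by omega)
    have hyy : y₁ = y₂ := Nat.eq_of_mul_eq_mul_left e₁.2.2.1 (by
      have := e₁.2.2.2.2; have := e₂.2.2.2.2; omega)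
    rw [hxx, hyy]
  · rintro ⟨a, b⟩ hab
    have h := mem_product.1 hab
    obtain ⟨hak, hk0⟩ := Nat.mem_divisors.1 h.1
    obtain ⟨hbk, hnk0⟩ := Nat.mem_divisors.1 h.2
    refine ⟨((a, k / a), (b, (n - k) / b)), ?_, rfl⟩
    have ha : 0 < a := Nat.pos_of_dvd_of_pos hak (by omega)
    have hb : 0 < b := Nat.pos_of_dvd_of_pos hbk (by omega)
    have h1 : a * (k / a) = k := Nat.mul_div_cancel' hak
    have h2 : b * ((n - k) / b) = n - k := Nat.mul_div_cancel' hbk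
    have hx : 0 < k / a := Nat.div_pos (Nat.le_of_dvd (by omega) hak) ha
    have hy : 0 < (n - k) / b := Nat.div_pos (Nat.le_of_dvd (by omega) hbk) hb
    exact mem_filter.2 ⟨mem_QQ.2 ⟨ha, hx, hb, hy, by omega⟩, h1⟩

private lemma QQeq_card (n : ℕ) (hn : 0 < n) :
    ((QQ n).filter (fun q => q.1.1 = q.2.1)).card + n.divisors.card =
      ∑ d ∈ n.divisors, d := by
  have hcard : ((QQ n).filter (fun q => q.1.1 = q.2.1)).card =
      ∑ a ∈ n.divisors, (n / a - 1) := by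
    rw [Finset.card_eq_sum_card_fiberwise (f := fun q => q.1.1) (t := n.divisors)
      (fun q hq => by
        obtain ⟨⟨a, x⟩, b, y⟩ := q
        have hq1 := (mem_filter.1 hq).1
        have hab : a = b := (mem_filter.1 hq).2
        rw [mem_QQ] at hq1
        obtain ⟨ha, hx, hb, hy, he⟩ := hq1
        subst hab
        show a ∈ n.divisors
        refine Nat.mem_divisors.2 ⟨⟨x + y, ?_⟩, by omega⟩
        rw [Nat.mul_add]; omega)]
    refine Finset.sum_congr rfl fun a hadvd => ?_
    rw [Nat.mem_divisors] at hadvd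
    obtain ⟨hadvd, -⟩ := hadvd
    have ha : 0 < a := Nat.pos_of_dvd_of_pos hadvd hn
    have hna : a * (n / a) = n := Nat.mul_div_cancel' hadvd
    rw [← Nat.card_Ico 1 (n / a)]
    refine Finset.card_bij (fun q _ => q.1.2) ?_ ?_ ?_
    · rintro ⟨⟨a', x⟩, b, y⟩ hq
      have h0 := mem_filter.1 hq
      have haa : a' = a := h0.2
      have h1 := mem_filter.1 h0.1
      have hab : a' = b := h1.2
      have h2 := mem_QQ.1 h1.1
      obtain ⟨ha', hx, hb, hy, he⟩ := h2
      subst hab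
      rw [haa] at he
      show x ∈ Ico 1 (n / a)
      rw [mem_Ico]
      have h7 : a ≤ a * y := Nat.le_mul_of_pos_right a hy
      have h5 : a * (x + 1) ≤ n := by rw [Nat.mul_add]; omega
      have h6 : x + 1 ≤ n / a := (Nat.le_div_iff_mul_le ha).2 (by rw [Nat.mul_comm]; exact h5)
      omega
    · rintro ⟨⟨a₁, x₁⟩, b₁, y₁⟩ h₁ ⟨⟨a₂, x₂⟩, b₂, y₂⟩ h₂ h
      have hx12 : x₁ = x₂ := h
      have e₁ := mem_filter.1 h₁
      have e₂ := mem_filter.1 h₂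
      have haa₁ : a₁ = a := e₁.2
      have haa₂ : a₂ = a := e₂.2
      have f₁ := mem_filter.1 e₁.1
      have f₂ := mem_filter.1 e₂.1
      have hab₁ : a₁ = b₁ := f₁.2
      have hab₂ : a₂ = b₂ := f₂.2
      have g₁ := mem_QQ.1 f₁.1
      have g₂ := mem_QQ.1 f₂.1
      have ea : a₁ = a₂ := haa₁.trans haa₂.symm
      have eb : b₁ = b₂ := hab₁.symm.trans (ea.trans hab₂)
      have key : b₁ * y₁ = b₁ * y₂ := by
        have t₁ := g₁.2.2.2.2
        have t₂ := g₂.2.2.2.2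
        rw [← ea, ← eb, ← hx12] at t₂
        omega
      have ey : y₁ = y₂ := Nat.eq_of_mul_eq_mul_left g₁.2.2.1 key
      simp only [Prod.mk.injEq]
      exact ⟨⟨ea, hx12⟩, eb, ey⟩
    · intro x hx
      rw [mem_Ico] at hx
      refine ⟨((a, x), (a, n / a - x)), ?_, rfl⟩
      have h1 : a * x + a * (n / a - x) = n := by
        rw [← Nat.mul_add]
        have hxx : x + (n / a - x) = n / a := by omega
        rw [hxx, hna]
      exact mem_filter.2 ⟨mem_filter.2 ⟨mem_QQ.2 ⟨ha, by omega, ha, by omega, h1⟩, rfl⟩, rfl⟩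
  rw [hcard, Finset.card_eq_sum_ones, ← Finset.sum_add_distrib]
  have h2 : ∀ a ∈ n.divisors, n / a - 1 + 1 = n / a := by
    intro a ha
    rw [Nat.mem_divisors] at ha
    have h1 : 0 < a := Nat.pos_of_dvd_of_pos ha.1 hn
    have h3 : 1 ≤ n / a := (Nat.one_le_div_iff h1).2 (Nat.le_of_dvd hn ha.1)
    omega
  rw [Finset.sum_congr rfl h2]
  exact Nat.sum_div_divisors n id

private lemma QQgt_card (n : ℕ) :
    ((QQ n).filter (fun q => q.2.1 < q.1.1)).card =
      ((QQ n).filter (fun q => q.1.1 < q.2.1)).card := by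
  refine Finset.card_nbij (fun q => (q.2, q.1)) ?_ ?_ ?_
  · rintro ⟨⟨a, x⟩, b, y⟩ hq
    have h1 := mem_filter.1 hq
    have hlt : b < a := h1.2
    obtain ⟨ha, hx, hb, hy, he⟩ := mem_QQ.1 h1.1
    exact mem_filter.2 ⟨mem_QQ.2 ⟨hb, hy, ha, hx, by omega⟩, hlt⟩
  · rintro ⟨⟨a₁, x₁⟩, b₁, y₁⟩ - ⟨⟨a₂, x₂⟩, b₂, y₂⟩ - h
    simp only [Prod.mk.injEq] at h ⊢
    tauto
  · rintro ⟨⟨a, x⟩, b, y⟩ hq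
    simp only [Finset.coe_filter, Set.mem_setOf_eq] at hq
    obtain ⟨hmem, hlt⟩ := hq
    obtain ⟨ha, hx, hb, hy, he⟩ := mem_QQ.1 hmem
    refine ⟨((b, y), (a, x)), ?_, rfl⟩
    simp only [Finset.coe_filter, Set.mem_setOf_eq]
    exact ⟨mem_QQ.2 ⟨hb, hy, ha, hx, by omega⟩, hlt⟩

private lemma pair_eq_pair {a b c d : ℕ} (hab : a < b) (hcd : c < d)
    (h : ({a, b} : Finset ℕ) = {c, d}) : a = c ∧ b = d := by
  have h1 : a ∈ ({c, d} : Finset ℕ) := h ▸ (by simp)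
  have h2 : b ∈ ({c, d} : Finset ℕ) := h ▸ (by simp)
  have h3 : c ∈ ({a, b} : Finset ℕ) := h.symm ▸ (by simp)
  have h4 : d ∈ ({a, b} : Finset ℕ) := h.symm ▸ (by simp)
  simp only [mem_insert, mem_singleton] at h1 h2 h3 h4
  omega

private lemma QQlt_card (n : ℕ) :
    ((QQ n).filter (fun q => q.1.1 < q.2.1)).card = nu 2 n := by
  unfold nu
  refine Finset.card_bij (fun q hq =>
    ⟨Multiset.replicate q.1.2 q.1.1 + Multiset.replicate q.2.2 q.2.1, ?_, ?_⟩) ?_ ?_ ?_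
  · intro i hi
    obtain ⟨ha, hx, hb, hy, he⟩ := mem_QQ.1 (mem_filter.1 hq).1
    rw [Multiset.mem_add, Multiset.mem_replicate, Multiset.mem_replicate] at hi
    rcases hi with ⟨-, rfl⟩ | ⟨-, rfl⟩
    · exact ha
    · exact hb
  · obtain ⟨ha, hx, hb, hy, he⟩ := mem_QQ.1 (mem_filter.1 hq).1
    rw [Multiset.sum_add, Multiset.sum_replicate, Multiset.sum_replicate,
      smul_eq_mul, smul_eq_mul, mul_comm q.1.2, mul_comm q.2.2]
    exact he
  · rintro ⟨⟨a, x⟩, b, y⟩ hq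
    have hlt : a < b := (mem_filter.1 hq).2
    obtain ⟨ha, hx, hb, hy, he⟩ := mem_QQ.1 (mem_filter.1 hq).1
    refine mem_filter.2 ⟨mem_univ _, ?_⟩
    show (Multiset.replicate x a + Multiset.replicate y b).toFinset.card = 2
    rw [Multiset.toFinset_add, Multiset.toFinset_replicate, Multiset.toFinset_replicate,
      if_neg (by omega), if_neg (by omega)]
    exact Finset.card_pair (by omega)
  · rintro ⟨⟨a₁, x₁⟩, b₁, y₁⟩ h₁ ⟨⟨a₂, x₂⟩, b₂, y₂⟩ h₂ h
    have hlt₁ : a₁ < b₁ := (mem_filter.1 h₁).2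
    have hlt₂ : a₂ < b₂ := (mem_filter.1 h₂).2
    obtain ⟨ha₁, hx₁, hb₁, hy₁, he₁⟩ := mem_QQ.1 (mem_filter.1 h₁).1
    obtain ⟨ha₂, hx₂, hb₂, hy₂, he₂⟩ := mem_QQ.1 (mem_filter.1 h₂).1
    have hparts : Multiset.replicate x₁ a₁ + Multiset.replicate y₁ b₁ =
        Multiset.replicate x₂ a₂ + Multiset.replicate y₂ b₂ :=
      congrArg Nat.Partition.parts h
    have htf : ({a₁, b₁} : Finset ℕ) = {a₂, b₂} := by
      have h5 := congrArg Multiset.toFinset hparts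
      rw [Multiset.toFinset_add, Multiset.toFinset_add, Multiset.toFinset_replicate,
        Multiset.toFinset_replicate, Multiset.toFinset_replicate, Multiset.toFinset_replicate,
        if_neg (by omega), if_neg (by omega), if_neg (by omega), if_neg (by omega)] at h5
      exact h5
    obtain ⟨hac, hbd⟩ := pair_eq_pair hlt₁ hlt₂ htf
    subst hac; subst hbd
    have hcx := congrArg (Multiset.count a₁) hparts
    have hcy := congrArg (Multiset.count b₁) hparts
    have hne1 : ¬ (b₁ = a₁) := by omega
    have hne2 : ¬ (a₁ = b₁) := by omega
    have hpa : a₁ = a₁ := rfl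
    have hpb : b₁ = b₁ := rfl
    rw [Multiset.count_add, Multiset.count_add, Multiset.count_replicate,
      Multiset.count_replicate, Multiset.count_replicate, Multiset.count_replicate,
      if_pos hpa, if_pos hpa, if_neg hne1, if_neg hne1] at hcx
    rw [Multiset.count_add, Multiset.count_add, Multiset.count_replicate,
      Multiset.count_replicate, Multiset.count_replicate, Multiset.count_replicate,
      if_pos hpb, if_pos hpb, if_neg hne2, if_neg hne2] at hcy
    have ex : x₁ = x₂ := by omega
    have ey : y₁ = y₂ := by omega
    rw [ex, ey]
  · intro p hp
    have hp2 : p.parts.toFinset.card = 2 := (mem_filter.1 hp).2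
    obtain ⟨a, b, hne, hab⟩ := Finset.card_eq_two.1 hp2
    wlog hlt : a < b generalizing a b
    · exact this b a hne.symm (by rw [Finset.pair_comm] at hab; exact hab) (by omega)
    have hma : a ∈ p.parts := Multiset.mem_toFinset.1 (by rw [hab]; simp)
    have hmb : b ∈ p.parts := Multiset.mem_toFinset.1 (by rw [hab]; simp)
    have ha : 0 < a := p.parts_pos hma
    have hb : 0 < b := p.parts_pos hmb
    set x := p.parts.count a with hxdef
    set y := p.parts.count b with hydef
    have hx : 0 < x := Multiset.count_pos.2 hma
    have hy : 0 < y := Multiset.count_pos.2 hmb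
    have hdec : p.parts = Multiset.replicate x a + Multiset.replicate y b := by
      conv_lhs => rw [← Multiset.toFinset_sum_count_nsmul_eq p.parts]
      rw [hab, Finset.sum_pair hne, Multiset.nsmul_singleton, Multiset.nsmul_singleton]
    have he : a * x + b * y = n := by
      have hs := p.parts_sum
      rw [hdec, Multiset.sum_add, Multiset.sum_replicate, Multiset.sum_replicate,
        smul_eq_mul, smul_eq_mul, mul_comm x a, mul_comm y b] at hs
      exact hs
    refine ⟨((a, x), (b, y)), ?_, ?_⟩
    · exact mem_filter.2 ⟨mem_QQ.2 ⟨ha, hx, hb, hy, he⟩, hlt⟩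
    · exact Nat.Partition.ext hdec.symm

private lemma card_QQ_split (n : ℕ) :
    (QQ n).card = ((QQ n).filter (fun q => q.1.1 = q.2.1)).card
      + (((QQ n).filter (fun q => q.1.1 < q.2.1)).card
        + ((QQ n).filter (fun q => q.2.1 < q.1.1)).card) := by
  have hdisj : Disjoint ((QQ n).filter (fun q => q.1.1 < q.2.1))
      ((QQ n).filter (fun q => q.2.1 < q.1.1)) := by
    refine Finset.disjoint_left.2 fun q hq1 hq2 => ?_
    have h1 : q.1.1 < q.2.1 := (mem_filter.1 hq1).2
    have h2 : q.2.1 < q.1.1 := (mem_filter.1 hq2).2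
    omega
  have e1 : ((QQ n).filter (fun q => ¬ q.1.1 = q.2.1)) =
      ((QQ n).filter (fun q => q.1.1 < q.2.1)) ∪ ((QQ n).filter (fun q => q.2.1 < q.1.1)) := by
    rw [← Finset.filter_or]
    exact Finset.filter_congr (fun q _ => by omega)
  have e2 := Finset.card_filter_add_card_filter_not (s := QQ n)
    (p := fun q => q.1.1 = q.2.1)
  rw [e1, Finset.card_union_of_disjoint hdisj] at e2
  omega

theorem two_nu_two_eq (n : ℕ) (hn : 0 < n) :
    (2 * nu 2 n : ℤ) =
      (∑ k ∈ Finset.Ico 1 n, (k.divisors.card * (n - k).divisors.card : ℤ))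
        - (ArithmeticFunction.sigma 1 n : ℤ) + (n.divisors.card : ℤ) := by
  have h1 := sum_eq_card_QQ n
  have h2 := QQeq_card n hn
  have h3 := QQgt_card n
  have h4 := QQlt_card n
  have h5 := card_QQ_split n
  have hcast : (∑ k ∈ Finset.Ico 1 n, ((k.divisors.card : ℤ) * ((n - k).divisors.card : ℤ)))
      = ((∑ k ∈ Finset.Ico 1 n, k.divisors.card * (n - k).divisors.card : ℕ) : ℤ) := by
    push_cast
    rfl
  rw [hcast, h1, ArithmeticFunction.sigma_one_apply]
  omega
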